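/- Suppose f is C⁴ on a neighbourhood of x(0), x is four times differentiable at 0 along the pathway, the natural pathway equation f(x(t)) = (1−t) • f(x(0)) holds for all t ∈ [0,1], and J := f′(x(0)) is a continuous linear isomorphism from E onto F. Fix ε ∈ ℝ and define c_n := (εⁿ/n!) • x⁽ⁿ⁾(0). Then f⁽⁴⁾(x(0))[c₁,c₁,c₁,c₁] + 12 • f⁽³⁾(x(0))[c₁,c₁,c₂] + 24 • f″(x(0))[c₁,c₃] + 12 • f″(x(0))[c₂,c₂] + 24 • J(c₄) = 0, and hence c₄ = −(1/24) • J⁻¹( f⁽⁴⁾(x(0))[c₁,c₁,c₁,c₁] + 12 • f⁽³⁾(x(0))[c₁,c₁,c₂] + 24 • f″(x(0))[c₁,c₃] + 12 • f″(x(0))[c₂,c₂] ). -/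

import Mathlib

set_option maxHeartbeats 1000000


open Topology

section Aux

variable {E F : Type*} [NormedAddCommGroup E] [NormedSpace ℝ E]
    [NormedAddCommGroup F] [NormedSpace ℝ F]

private noncomputable instance nacg3 : NormedAddCommGroup (E →L[ℝ] E →L[ℝ] E →L[ℝ] F) :=
  ContinuousLinearMap.toNormedAddCommGroup (σ₁₂ := RingHom.id ℝ) (E := E) (F := E →L[ℝ] E →L[ℝ] F)

private noncomputable instance ns3 : NormedSpace ℝ (E →L[ℝ] E →L[ℝ] E →L[ℝ] F) :=
  ContinuousLinearMap.toNormedSpace (σ₁₂ := RingHom.id ℝ) (E := E) (F := E →L[ℝ] E →L[ℝ] F)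

private lemma itf3_apply' (f : E → F) (p a b c : E) :
    iteratedFDeriv ℝ 3 f p ![a,b,c] = fderiv ℝ (fderiv ℝ (fderiv ℝ f)) p a b c := by
  rw [iteratedFDeriv_succ_apply_right, iteratedFDeriv_two_apply]; congr 1

private lemma itf4_apply' (f : E → F) (p a b c d : E) :
    iteratedFDeriv ℝ 4 f p ![a,b,c,d]
      = fderiv ℝ (fderiv ℝ (fderiv ℝ (fderiv ℝ f))) p a b c d := by
  rw [iteratedFDeriv_succ_apply_right, iteratedFDeriv_succ_apply_right,
    iteratedFDeriv_two_apply]; congr 1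

/-- The raw fourth-order chain-rule identity along the natural pathway. -/
private lemma raw_identity (f : E → F) (x : ℝ → E)
    (hf : ContDiffAt ℝ 4 f (x 0))
    (hx1 : ∀ᶠ s in 𝓝[≥] (0 : ℝ), DifferentiableWithinAt ℝ x (Set.Ici 0) s)
    (hx2 : ∀ᶠ s in 𝓝[≥] (0 : ℝ),
      DifferentiableWithinAt ℝ (iteratedDerivWithin 1 x (Set.Ici 0)) (Set.Ici 0) s)
    (hx3 : ∀ᶠ s in 𝓝[≥] (0 : ℝ),
      DifferentiableWithinAt ℝ (iteratedDerivWithin 2 x (Set.Ici 0)) (Set.Ici 0) s)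
    (hx4 : DifferentiableWithinAt ℝ (iteratedDerivWithin 3 x (Set.Ici 0)) (Set.Ici 0) 0)
    (hpath : ∀ t ∈ Set.Icc (0 : ℝ) 1, f (x t) = (1 - t) • f (x 0)) :
    fderiv ℝ (fderiv ℝ (fderiv ℝ (fderiv ℝ f))) (x 0)
        (iteratedDerivWithin 1 x (Set.Ici 0) 0) (iteratedDerivWithin 1 x (Set.Ici 0) 0)
        (iteratedDerivWithin 1 x (Set.Ici 0) 0) (iteratedDerivWithin 1 x (Set.Ici 0) 0)
      + (6 : ℝ) • fderiv ℝ (fderiv ℝ (fderiv ℝ f)) (x 0)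
        (iteratedDerivWithin 1 x (Set.Ici 0) 0) (iteratedDerivWithin 1 x (Set.Ici 0) 0)
        (iteratedDerivWithin 2 x (Set.Ici 0) 0)
      + (4 : ℝ) • fderiv ℝ (fderiv ℝ f) (x 0)
        (iteratedDerivWithin 1 x (Set.Ici 0) 0) (iteratedDerivWithin 3 x (Set.Ici 0) 0)
      + (3 : ℝ) • fderiv ℝ (fderiv ℝ f) (x 0)
        (iteratedDerivWithin 2 x (Set.Ici 0) 0) (iteratedDerivWithin 2 x (Set.Ici 0) 0)
      + fderiv ℝ f (x 0) (iteratedDerivWithin 4 x (Set.Ici 0) 0) = 0 := by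
  set S : Set ℝ := Set.Ici 0 with hS
  set p : E := x 0 with hp
  set f1 : E → (E →L[ℝ] F) := fderiv ℝ f with hf1d
  set f2 := fderiv ℝ f1 with hf2d
  set f3 := fderiv ℝ f2 with hf3d
  set Y1 := iteratedDerivWithin 1 x S with hY1d
  set Y2 := iteratedDerivWithin 2 x S with hY2d
  set Y3 := iteratedDerivWithin 3 x S with hY3d
  have u0 : UniqueDiffOn ℝ S := uniqueDiffOn_Ici 0
  have h0S : (0 : ℝ) ∈ S := Set.self_mem_Ici
  have ev_mem : ∀ᶠ s in 𝓝[S] (0:ℝ), s ∈ S := eventually_mem_nhdsWithin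
  -- smoothness of the derivative maps
  have cf1 : ContDiffAt ℝ 3 f1 p := hf.fderiv_right (by norm_num)
  have cf2 : ContDiffAt ℝ 2 f2 p := cf1.fderiv_right (by norm_num)
  have cf3 : ContDiffAt ℝ 1 f3 p := cf2.fderiv_right (by norm_num)
  have A0 : ∀ᶠ z in 𝓝 p, HasFDerivAt f (f1 z) z := by
    filter_upwards [hf.eventually (by norm_num)] with z hz
    exact (hz.differentiableAt (by norm_num)).hasFDerivAt
  have A1 : ∀ᶠ z in 𝓝 p, HasFDerivAt f1 (f2 z) z := by
    filter_upwards [cf1.eventually (by norm_num)] with z hz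
    exact (hz.differentiableAt (by norm_num)).hasFDerivAt
  have A2 : ∀ᶠ z in 𝓝 p, HasFDerivAt f2 (f3 z) z := by
    filter_upwards [cf2.eventually (by norm_num)] with z hz
    exact (hz.differentiableAt (by norm_num)).hasFDerivAt
  have A3 : HasFDerivAt f3 (fderiv ℝ f3 p) p :=
    (cf3.differentiableAt (by norm_num)).hasFDerivAt
  -- continuity of x within S at 0
  have hxc : Filter.Tendsto x (𝓝[S] 0) (𝓝 p) :=
    (hx1.self_of_nhdsWithin h0S).continuousWithinAt
  have B0 : ∀ᶠ s in 𝓝[S] (0:ℝ), HasFDerivAt f (f1 (x s)) (x s) := hxc.eventually A0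
  have B1 : ∀ᶠ s in 𝓝[S] (0:ℝ), HasFDerivAt f1 (f2 (x s)) (x s) := hxc.eventually A1
  have B2 : ∀ᶠ s in 𝓝[S] (0:ℝ), HasFDerivAt f2 (f3 (x s)) (x s) := hxc.eventually A2
  -- derivatives of x
  have hY1 : ∀ᶠ s in 𝓝[S] (0:ℝ), HasDerivWithinAt x (Y1 s) S s := by
    filter_upwards [hx1, ev_mem] with s h hs
    have : Y1 s = derivWithin x S s := congrFun iteratedDerivWithin_one s
    rw [this]; exact h.hasDerivWithinAt
  have hY2 : ∀ᶠ s in 𝓝[S] (0:ℝ), HasDerivWithinAt Y1 (Y2 s) S s := by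
    filter_upwards [hx2, ev_mem] with s h hs
    have : Y2 s = derivWithin Y1 S s := congrFun iteratedDerivWithin_succ s
    rw [this]; exact h.hasDerivWithinAt
  have hY3 : ∀ᶠ s in 𝓝[S] (0:ℝ), HasDerivWithinAt Y2 (Y3 s) S s := by
    filter_upwards [hx3, ev_mem] with s h hs
    have : Y3 s = derivWithin Y2 S s := congrFun iteratedDerivWithin_succ s
    rw [this]; exact h.hasDerivWithinAt
  have hY4 : HasDerivWithinAt Y3 (iteratedDerivWithin 4 x S 0) S 0 := by
    have : iteratedDerivWithin 4 x S 0 = derivWithin Y3 S 0 :=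
      congrFun iteratedDerivWithin_succ 0
    rw [this]; exact hx4.hasDerivWithinAt
  -- chain of derivatives of g = f ∘ x
  have hG1 : ∀ᶠ s in 𝓝[S] (0:ℝ),
      HasDerivWithinAt (fun t => f (x t)) (f1 (x s) (Y1 s)) S s := by
    filter_upwards [B0, hY1] with s h0 h1
    exact h0.comp_hasDerivWithinAt s h1
  have hG2 : ∀ᶠ s in 𝓝[S] (0:ℝ),
      HasDerivWithinAt (fun t => f1 (x t) (Y1 t))
        (f2 (x s) (Y1 s) (Y1 s) + f1 (x s) (Y2 s)) S s := by
    filter_upwards [B1, hY1, hY2] with s h1 hy1 hy2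
    exact (h1.comp_hasDerivWithinAt s hy1).clm_apply hy2
  have hG3 : ∀ᶠ s in 𝓝[S] (0:ℝ),
      HasDerivWithinAt (fun t => f2 (x t) (Y1 t) (Y1 t) + f1 (x t) (Y2 t))
        (((f3 (x s) (Y1 s) (Y1 s) + f2 (x s) (Y2 s)) (Y1 s) + f2 (x s) (Y1 s) (Y2 s))
          + (f2 (x s) (Y1 s) (Y2 s) + f1 (x s) (Y3 s))) S s := by
    filter_upwards [B1, B2, hY1, hY2, hY3] with s h1 h2 hy1 hy2 hy3
    exact (((h2.comp_hasDerivWithinAt s hy1).clm_apply hy2).clm_apply hy2).add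
      ((h1.comp_hasDerivWithinAt s hy1).clm_apply hy3)
  -- the affine model h
  have hgh : ∀ᶠ s in 𝓝[S] (0:ℝ), f (x s) = (1 - s) • f p := by
    have : Set.Ici (0:ℝ) ∩ Set.Iio 1 ∈ 𝓝[S] (0:ℝ) :=
      inter_mem_nhdsWithin _ (Iio_mem_nhds one_pos)
    filter_upwards [this] with s hs
    exact hpath s ⟨hs.1, le_of_lt hs.2⟩
  have haff : ∀ s : ℝ, HasDerivWithinAt (fun t : ℝ => (1 - t) • f p)
      ((-1 : ℝ) • f p) S s := by
    intro s
    have h1 : HasDerivWithinAt (fun t : ℝ => 1 - t) (-1 : ℝ) S s := by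
      simpa using (hasDerivWithinAt_id s S).const_sub 1
    exact h1.smul_const (f p)
  -- first-order: derivative of g is constant -f p
  have heq1 : ∀ᶠ s in 𝓝[S] (0:ℝ), f1 (x s) (Y1 s) = (-1 : ℝ) • f p := by
    have hgh2 := eventually_eventually_nhdsWithin.2 hgh
    filter_upwards [hG1, hgh2, hgh, ev_mem] with s hd hev h0 hs
    have hd' : HasDerivWithinAt (fun t : ℝ => (1 - t) • f p) (f1 (x s) (Y1 s)) S s :=
      hd.congr_of_eventuallyEq (hev.mono fun t ht => ht.symm) h0.symm
    exact (u0 s hs).eq_deriv _ hd' (haff s)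
  -- second-order: derivative of constant is 0
  have heq2 : ∀ᶠ s in 𝓝[S] (0:ℝ),
      f2 (x s) (Y1 s) (Y1 s) + f1 (x s) (Y2 s) = 0 := by
    have h2 := eventually_eventually_nhdsWithin.2 heq1
    filter_upwards [hG2, h2, heq1, ev_mem] with s hd hev h0 hs
    have hd' : HasDerivWithinAt (fun _ : ℝ => (-1 : ℝ) • f p)
        (f2 (x s) (Y1 s) (Y1 s) + f1 (x s) (Y2 s)) S s :=
      hd.congr_of_eventuallyEq (hev.mono fun t ht => ht.symm) h0.symm
    exact (u0 s hs).eq_deriv _ hd' (hasDerivWithinAt_const s S _)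
  -- third-order
  have heq3 : ∀ᶠ s in 𝓝[S] (0:ℝ),
      ((f3 (x s) (Y1 s) (Y1 s) + f2 (x s) (Y2 s)) (Y1 s) + f2 (x s) (Y1 s) (Y2 s))
        + (f2 (x s) (Y1 s) (Y2 s) + f1 (x s) (Y3 s)) = 0 := by
    have h2 := eventually_eventually_nhdsWithin.2 heq2
    filter_upwards [hG3, h2, heq2, ev_mem] with s hd hev h0 hs
    have hd' : HasDerivWithinAt (fun _ : ℝ => (0 : F)) _ S s :=
      hd.congr_of_eventuallyEq (hev.mono fun t ht => ht.symm) h0.symm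
    exact (u0 s hs).eq_deriv _ hd' (hasDerivWithinAt_const s S _)
  -- fourth-order derivative of G3 at 0
  set f4 := fderiv ℝ f3 p with hf4d
  have hy1 := hY1.self_of_nhdsWithin h0S
  have hy2 := hY2.self_of_nhdsWithin h0S
  have hy3 := hY3.self_of_nhdsWithin h0S
  have b1 : HasFDerivAt f1 (f2 p) p := A1.self_of_nhds
  have b2 : HasFDerivAt f2 (f3 p) p := A2.self_of_nhds
  have k2 : HasDerivWithinAt (fun s => f3 (x s) (Y1 s))
      (f4 (Y1 0) (Y1 0) + f3 (x 0) (Y2 0)) S 0 :=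
    (A3.comp_hasDerivWithinAt 0 hy1).clm_apply (G := E →L[ℝ] E →L[ℝ] F) hy2
  have k3 : HasDerivWithinAt (fun s => f3 (x s) (Y1 s) (Y1 s))
      ((f4 (Y1 0) (Y1 0) + f3 (x 0) (Y2 0)) (Y1 0) + f3 (x 0) (Y1 0) (Y2 0)) S 0 :=
    k2.clm_apply hy2
  have k4 : HasDerivWithinAt (fun s => f2 (x s) (Y2 s))
      (f3 (x 0) (Y1 0) (Y2 0) + f2 (x 0) (Y3 0)) S 0 :=
    (b2.comp_hasDerivWithinAt 0 hy1).clm_apply hy3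
  have k6 : HasDerivWithinAt (fun s => (f3 (x s) (Y1 s) (Y1 s) + f2 (x s) (Y2 s)) (Y1 s))
      ((((f4 (Y1 0) (Y1 0) + f3 (x 0) (Y2 0)) (Y1 0) + f3 (x 0) (Y1 0) (Y2 0))
          + (f3 (x 0) (Y1 0) (Y2 0) + f2 (x 0) (Y3 0))) (Y1 0)
        + (f3 (x 0) (Y1 0) (Y1 0) + f2 (x 0) (Y2 0)) (Y2 0)) S 0 :=
    (k3.add k4).clm_apply hy2
  have k8 : HasDerivWithinAt (fun s => f2 (x s) (Y1 s) (Y2 s))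
      ((f3 (x 0) (Y1 0) (Y1 0) + f2 (x 0) (Y2 0)) (Y2 0) + f2 (x 0) (Y1 0) (Y3 0)) S 0 :=
    ((b2.comp_hasDerivWithinAt 0 hy1).clm_apply hy2).clm_apply hy3
  have k10 : HasDerivWithinAt (fun s => f1 (x s) (Y3 s))
      (f2 (x 0) (Y1 0) (Y3 0) + f1 (x 0) (iteratedDerivWithin 4 x S 0)) S 0 :=
    (b1.comp_hasDerivWithinAt 0 hy1).clm_apply hY4
  have hG4 : HasDerivWithinAt
      (fun t => ((f3 (x t) (Y1 t) (Y1 t) + f2 (x t) (Y2 t)) (Y1 t) + f2 (x t) (Y1 t) (Y2 t))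
        + (f2 (x t) (Y1 t) (Y2 t) + f1 (x t) (Y3 t)))
      (((((f4 (Y1 0) (Y1 0) + f3 (x 0) (Y2 0)) (Y1 0) + f3 (x 0) (Y1 0) (Y2 0))
          + (f3 (x 0) (Y1 0) (Y2 0) + f2 (x 0) (Y3 0))) (Y1 0)
        + (f3 (x 0) (Y1 0) (Y1 0) + f2 (x 0) (Y2 0)) (Y2 0)
        + ((f3 (x 0) (Y1 0) (Y1 0) + f2 (x 0) (Y2 0)) (Y2 0) + f2 (x 0) (Y1 0) (Y3 0)))
        + (((f3 (x 0) (Y1 0) (Y1 0) + f2 (x 0) (Y2 0)) (Y2 0) + f2 (x 0) (Y1 0) (Y3 0))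
          + (f2 (x 0) (Y1 0) (Y3 0) + f1 (x 0) (iteratedDerivWithin 4 x S 0)))) S 0 :=
    (k6.add k8).add (k8.add k10)
  -- conclude BIG = 0
  have hBIG :
      (((((f4 (Y1 0) (Y1 0) + f3 (x 0) (Y2 0)) (Y1 0) + f3 (x 0) (Y1 0) (Y2 0))
          + (f3 (x 0) (Y1 0) (Y2 0) + f2 (x 0) (Y3 0))) (Y1 0)
        + (f3 (x 0) (Y1 0) (Y1 0) + f2 (x 0) (Y2 0)) (Y2 0)
        + ((f3 (x 0) (Y1 0) (Y1 0) + f2 (x 0) (Y2 0)) (Y2 0) + f2 (x 0) (Y1 0) (Y3 0)))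
        + (((f3 (x 0) (Y1 0) (Y1 0) + f2 (x 0) (Y2 0)) (Y2 0) + f2 (x 0) (Y1 0) (Y3 0))
          + (f2 (x 0) (Y1 0) (Y3 0) + f1 (x 0) (iteratedDerivWithin 4 x S 0)))) = 0 := by
    have h2 := eventually_eventually_nhdsWithin.2 heq3
    have hev := h2.self_of_nhdsWithin h0S
    have h0 := heq3.self_of_nhdsWithin h0S
    have hd' : HasDerivWithinAt (fun _ : ℝ => (0 : F)) _ S 0 :=
      hG4.congr_of_eventuallyEq (hev.mono fun t ht => ht.symm) h0.symm
    exact (u0 0 h0S).eq_deriv _ hd' (hasDerivWithinAt_const 0 S _)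
  -- symmetry lemmas
  have s2 : ∀ a b : E, f2 p a b = f2 p b a := fun a b =>
    second_derivative_symmetric_of_eventually A0 b1 a b
  have s3a : ∀ a b : E, f3 p a b = f3 p b a := fun a b =>
    second_derivative_symmetric_of_eventually A1 b2 a b
  have s3b : ∀ a b c : E, f3 p a b c = f3 p a c b := by
    intro a b c
    have hsym : ∀ᶠ z in 𝓝 p, ∀ v w : E, f2 z v w = f2 z w v := by
      filter_upwards [hf.eventually (by norm_num)] with z hz v w
      exact (hz.isSymmSndFDerivAt (by norm_num)) v w
    have L : ∀ v w : E, fderiv ℝ (fun z => f2 z v w) p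
        = ((ContinuousLinearMap.apply ℝ F w).comp
            (ContinuousLinearMap.apply ℝ (E →L[ℝ] F) v)).comp (f3 p) := by
      intro v w
      have hM := HasFDerivAt.comp (g := ((ContinuousLinearMap.apply ℝ F w).comp
          (ContinuousLinearMap.apply ℝ (E →L[ℝ] F) v))) p (ContinuousLinearMap.hasFDerivAt _) b2
      have hM' : HasFDerivAt (fun z => f2 z v w)
          (((ContinuousLinearMap.apply ℝ F w).comp
            (ContinuousLinearMap.apply ℝ (E →L[ℝ] F) v)).comp (f3 p)) p := hM
      exact hM'.fderiv
    have hEq : fderiv ℝ (fun z => f2 z b c) p = fderiv ℝ (fun z => f2 z c b) p :=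
      Filter.EventuallyEq.fderiv_eq (hsym.mono fun z hz => hz b c)
    have h := DFunLike.congr_fun ((L b c).symm.trans (hEq.trans (L c b))) a
    simpa using h
  -- individual rewriting equalities
  have r1 : f3 p (Y2 0) (Y1 0) (Y1 0) = f3 p (Y1 0) (Y1 0) (Y2 0) := by
    have h := DFunLike.congr_fun (s3a (Y2 0) (Y1 0)) (Y1 0)
    rw [h, s3b]
  have r2 : f3 p (Y1 0) (Y2 0) (Y1 0) = f3 p (Y1 0) (Y1 0) (Y2 0) := s3b _ _ _
  have r3 : f2 p (Y3 0) (Y1 0) = f2 p (Y1 0) (Y3 0) := s2 _ _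
  simp only [ContinuousLinearMap.add_apply] at hBIG
  rw [r1, r2, r3] at hBIG
  rw [← hBIG]
  module

end Aux


/-- Finite-step correction identity at fourth order: with
`c_n := (εⁿ/n!) • x⁽ⁿ⁾(0)` (derivatives taken along the pathway),
`f⁽⁴⁾[c₁,c₁,c₁,c₁] + 12 • f⁽³⁾[c₁,c₁,c₂] + 24 • f″[c₁,c₃] + 12 • f″[c₂,c₂] + 24 • J c₄ = 0`,
hence `c₄ = -(1/24) • J⁻¹ (…)`. -/
theorem correction_fourth_order
    {E F : Type*} [NormedAddCommGroup E] [NormedSpace ℝ E] [CompleteSpace E]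
    [NormedAddCommGroup F] [NormedSpace ℝ F] [CompleteSpace F]
    (f : E → F) (x : ℝ → E)
    (hf : ContDiffAt ℝ 4 f (x 0))
    (hx1 : ∀ᶠ s in 𝓝[≥] (0 : ℝ), DifferentiableWithinAt ℝ x (Set.Ici 0) s)
    (hx2 : ∀ᶠ s in 𝓝[≥] (0 : ℝ),
      DifferentiableWithinAt ℝ (iteratedDerivWithin 1 x (Set.Ici 0)) (Set.Ici 0) s)
    (hx3 : ∀ᶠ s in 𝓝[≥] (0 : ℝ),
      DifferentiableWithinAt ℝ (iteratedDerivWithin 2 x (Set.Ici 0)) (Set.Ici 0) s)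
    (hx4 : DifferentiableWithinAt ℝ (iteratedDerivWithin 3 x (Set.Ici 0)) (Set.Ici 0) 0)
    (hpath : ∀ t ∈ Set.Icc (0 : ℝ) 1, f (x t) = (1 - t) • f (x 0))
    (J : E ≃L[ℝ] F) (hJ : (J : E →L[ℝ] F) = fderiv ℝ f (x 0))
    (ε : ℝ) (c₁ c₂ c₃ c₄ : E)
    (hc₁ : c₁ = ε • derivWithin x (Set.Ici 0) 0)
    (hc₂ : c₂ = (ε ^ 2 / 2) • iteratedDerivWithin 2 x (Set.Ici 0) 0)
    (hc₃ : c₃ = (ε ^ 3 / 6) • iteratedDerivWithin 3 x (Set.Ici 0) 0)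
    (hc₄ : c₄ = (ε ^ 4 / 24) • iteratedDerivWithin 4 x (Set.Ici 0) 0) :
    iteratedFDeriv ℝ 4 f (x 0) ![c₁, c₁, c₁, c₁]
      + (12 : ℝ) • iteratedFDeriv ℝ 3 f (x 0) ![c₁, c₁, c₂]
      + (24 : ℝ) • iteratedFDeriv ℝ 2 f (x 0) ![c₁, c₃]
      + (12 : ℝ) • iteratedFDeriv ℝ 2 f (x 0) ![c₂, c₂]
      + (24 : ℝ) • J c₄ = 0 ∧
    c₄ = -(1 / 24 : ℝ) • J.symm (iteratedFDeriv ℝ 4 f (x 0) ![c₁, c₁, c₁, c₁]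
      + (12 : ℝ) • iteratedFDeriv ℝ 3 f (x 0) ![c₁, c₁, c₂]
      + (24 : ℝ) • iteratedFDeriv ℝ 2 f (x 0) ![c₁, c₃]
      + (12 : ℝ) • iteratedFDeriv ℝ 2 f (x 0) ![c₂, c₂]) := by
  have raw := raw_identity f x hf hx1 hx2 hx3 hx4 hpath
  have d1 : derivWithin x (Set.Ici 0) 0 = iteratedDerivWithin 1 x (Set.Ici 0) 0 :=
    (congrFun iteratedDerivWithin_one 0).symm
  have eq1 : iteratedFDeriv ℝ 4 f (x 0) ![c₁, c₁, c₁, c₁]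
      + (12 : ℝ) • iteratedFDeriv ℝ 3 f (x 0) ![c₁, c₁, c₂]
      + (24 : ℝ) • iteratedFDeriv ℝ 2 f (x 0) ![c₁, c₃]
      + (12 : ℝ) • iteratedFDeriv ℝ 2 f (x 0) ![c₂, c₂]
      + (24 : ℝ) • J c₄ = 0 := by
    rw [← ContinuousLinearEquiv.coe_coe J, hJ]
    simp only [itf4_apply', itf3_apply', iteratedFDeriv_two_apply,
      Matrix.cons_val_zero, Matrix.cons_val_one, Matrix.head_cons]
    rw [hc₁, d1, hc₂, hc₃, hc₄]
    simp only [map_smul, ContinuousLinearMap.smul_apply]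
    have raw4 := congrArg (fun v => (ε ^ 4 : ℝ) • v) raw
    simp only [smul_zero] at raw4
    rw [← raw4]
    module
  refine ⟨eq1, ?_⟩
  have h24 := eq_neg_of_add_eq_zero_right eq1
  have hJc : J c₄ = -(1 / 24 : ℝ) • (iteratedFDeriv ℝ 4 f (x 0) ![c₁, c₁, c₁, c₁]
      + (12 : ℝ) • iteratedFDeriv ℝ 3 f (x 0) ![c₁, c₁, c₂]
      + (24 : ℝ) • iteratedFDeriv ℝ 2 f (x 0) ![c₁, c₃]
      + (12 : ℝ) • iteratedFDeriv ℝ 2 f (x 0) ![c₂, c₂]) := by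
    calc J c₄ = (1 / 24 : ℝ) • ((24 : ℝ) • J c₄) := by
          rw [smul_smul]; norm_num
      _ = -(1 / 24 : ℝ) • _ := by rw [h24, smul_neg, neg_smul]
  calc c₄ = J.symm (J c₄) := (J.symm_apply_apply c₄).symm
    _ = _ := by rw [hJc, map_smul]
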